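/- For all integers m and ℓ with 1 < ℓ < m, one has ∑_{r=0}^{ℓ−1} binom(m−r, m−ℓ) · binom(m,r) · B_r = 0 in ℚ. -/

import Mathlib

open Finset

theorem stmt_13 (m l : ℕ) (hl : 1 < l) (hlm : l < m) :
    (∑ r ∈ Finset.range l,
        ((m - r).choose (m - l) : ℚ) * (m.choose r : ℚ) * bernoulli r) = 0 := by
  have key : ∀ r ∈ range l, ((m - r).choose (m - l) : ℚ) * (m.choose r : ℚ) * bernoulli r
      = (m.choose l : ℚ) * ((l.choose r : ℚ) * bernoulli r) := by
    intro r hr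
    have hr' : r < l := mem_range.mp hr
    have h1 : (m - r).choose (m - l) = (m - r).choose (l - r) := by
      rw [← Nat.choose_symm (show m - l ≤ m - r by omega)]
      congr 1
      omega
    have h2 := Nat.choose_mul (n := m) (k := l) (s := r) hr'.le
    have h2q : ((m - r).choose (l - r) : ℚ) * (m.choose r : ℚ)
        = (m.choose l : ℚ) * (l.choose r : ℚ) := by
      rw [mul_comm]; exact_mod_cast congrArg Nat.cast h2.symm
    rw [h1, mul_comm ((m - r).choose (l - r) : ℚ), mul_assoc, ← mul_assoc, mul_comm ((m.choose r : ℚ)), h2q, mul_assoc]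
  rw [Finset.sum_congr rfl key, ← Finset.mul_sum, sum_bernoulli]
  simp [Nat.ne_of_gt hl]
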